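/- The map g̃ : Δ̊ → ℝⁿ, g̃(x) = x − (1/2)∑ᵢ log(κᵢ − ⟨x, ηᵢ⟩) ηᵢ, is surjective onto ℝⁿ. -/

import Mathlib

open scoped RealInnerProductSpace
open Real Set Filter

noncomputable def phiGT (t : ℝ) : ℝ := t * Real.log t - t

lemma phiGT_continuous : Continuous phiGT :=
  Real.continuous_mul_log.sub continuous_id

lemma phiGT_lb {t : ℝ} (ht : 0 ≤ t) : -1 ≤ phiGT t := by
  rcases eq_or_lt_of_le ht with h | h
  · simp [phiGT, ← h]
  · have h1 := Real.log_le_sub_one_of_pos (inv_pos.mpr h)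
    rw [Real.log_inv] at h1
    have h2 : t * t⁻¹ = 1 := mul_inv_cancel₀ (ne_of_gt h)
    unfold phiGT
    nlinarith

lemma phiGT_hasDerivAt {t : ℝ} (ht : 0 < t) : HasDerivAt phiGT (Real.log t) t := by
  have h1 := (hasDerivAt_id t).mul (Real.hasDerivAt_log (ne_of_gt ht))
  simp only [id] at h1
  have h2 : 1 * Real.log t + t * t⁻¹ = Real.log t + 1 := by
    field_simp
  rw [h2] at h1
  exact (h1.sub (hasDerivAt_id t)).congr_deriv (by ring)

lemma phiGT_convex : ConvexOn ℝ (Set.Ici (0:ℝ)) phiGT :=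
  Real.convexOn_mul_log.sub (concaveOn_id (convex_Ici 0))

section Main

variable {E : Type*} [NormedAddCommGroup E] [InnerProductSpace ℝ E]

lemma F_hasFDerivAt {N : ℕ} (η : Fin N → E) (κ : Fin N → ℝ) (y x : E)
    (hx : ∀ i, ⟪x, η i⟫ < κ i) :
    HasFDerivAt
      (fun z => (1/2 : ℝ) * ⟪z - y, z - y⟫ + (1/2 : ℝ) * ∑ i, phiGT (κ i - ⟪z, η i⟫))
      (innerSL ℝ (x - y - (1/2:ℝ) • ∑ i, Real.log (κ i - ⟪x, η i⟫) • η i)) x := by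
  have hid : HasFDerivAt (fun z : E => z - y) (ContinuousLinearMap.id ℝ E) x :=
    (hasFDerivAt_id x).sub_const y
  have h1 := (hid.inner ℝ hid).const_mul (1/2 : ℝ)
  have h2 : ∀ i : Fin N, HasFDerivAt (fun z : E => phiGT (κ i - ⟪z, η i⟫))
      (Real.log (κ i - ⟪x, η i⟫) • (-(innerSL ℝ (η i)))) x := by
    intro i
    have hinner : HasFDerivAt (fun z : E => κ i - ⟪z, η i⟫) (-(innerSL ℝ (η i))) x := by
      have := (hasFDerivAt_const (κ i) x).sub (innerSL ℝ (η i)).hasFDerivAt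
      simpa only [zero_sub, Pi.sub_def, innerSL_apply_apply, real_inner_comm] using this
    exact (phiGT_hasDerivAt (by linarith [hx i])).comp_hasFDerivAt x hinner
  have h3 := (HasFDerivAt.sum (u := Finset.univ) (fun i _ => h2 i)).const_mul (1/2 : ℝ)
  have h4 := h1.add h3
  have heq : ((1/2 : ℝ) • ((fderivInnerCLM ℝ (x - y, x - y)).comp
        ((ContinuousLinearMap.id ℝ E).prod (ContinuousLinearMap.id ℝ E))) +
      (1/2 : ℝ) • ∑ i : Fin N, Real.log (κ i - ⟪x, η i⟫) • (-(innerSL ℝ (η i))))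
      = innerSL ℝ (x - y - (1/2:ℝ) • ∑ i, Real.log (κ i - ⟪x, η i⟫) • η i) := by
    ext w
    simp only [ContinuousLinearMap.add_apply, ContinuousLinearMap.smul_apply,
      ContinuousLinearMap.comp_apply, ContinuousLinearMap.prod_apply,
      ContinuousLinearMap.id_apply, fderivInnerCLM_apply, ContinuousLinearMap.sum_apply,
      ContinuousLinearMap.neg_apply, innerSL_apply_apply, smul_eq_mul, inner_sub_left,
      inner_smul_left, inner_sum, RCLike.conj_to_real, real_inner_comm w (x - y)]
    rw [Finset.mul_sum]
    ring_nf
    rw [sum_inner]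
    simp only [real_inner_smul_left, RCLike.conj_to_real]
    rw [← Finset.sum_mul]
  rw [← heq]
  exact h4.congr_of_eventuallyEq (Filter.Eventually.of_forall fun z => by
    simp only [Pi.add_apply, Finset.sum_apply])

end Main

noncomputable def FGT {E : Type*} [NormedAddCommGroup E] [InnerProductSpace ℝ E]
    {N : ℕ} (η : Fin N → E) (κ : Fin N → ℝ) (y : E) (z : E) : ℝ :=
  (1/2 : ℝ) * ⟪z - y, z - y⟫ + (1/2 : ℝ) * ∑ i, phiGT (κ i - ⟪z, η i⟫)

lemma FGT_cont {E : Type*} [NormedAddCommGroup E] [InnerProductSpace ℝ E]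
    {N : ℕ} (η : Fin N → E) (κ : Fin N → ℝ) (y : E) : Continuous (FGT η κ y) := by
  unfold FGT
  apply Continuous.add
  · exact continuous_const.mul ((continuous_id.sub continuous_const).inner
      (continuous_id.sub continuous_const))
  · exact continuous_const.mul (continuous_finset_sum _ fun i _ => phiGT_continuous.comp
      (continuous_const.sub (continuous_id.inner continuous_const)))

lemma FGT_hasFDerivAt {E : Type*} [NormedAddCommGroup E] [InnerProductSpace ℝ E]
    {N : ℕ} (η : Fin N → E) (κ : Fin N → ℝ) (y x : E) (hx : ∀ i, ⟪x, η i⟫ < κ i) :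
    HasFDerivAt (FGT η κ y)
      (innerSL ℝ (x - y - (1/2:ℝ) • ∑ i, Real.log (κ i - ⟪x, η i⟫) • η i)) x := by
  unfold FGT
  exact F_hasFDerivAt η κ y x hx

/-- The map `g̃(x) = x − ½∑ᵢ log(κᵢ − ⟨x,ηᵢ⟩) ηᵢ` maps the interior
`Δ̊ = {x | ⟨x,ηᵢ⟩ < κᵢ for all i}` onto all of `ℝⁿ`. -/
theorem gtilde_surjective (n N : ℕ) (η : Fin N → EuclideanSpace ℝ (Fin n)) (κ : Fin N → ℝ)
    (hne : {x : EuclideanSpace ℝ (Fin n) | ∀ i, ⟪x, η i⟫ < κ i}.Nonempty)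
    (y : EuclideanSpace ℝ (Fin n)) :
    ∃ x, (∀ i, ⟪x, η i⟫ < κ i) ∧
      x - (1/2 : ℝ) • ∑ i, Real.log (κ i - ⟪x, η i⟫) • η i = y := by
  obtain ⟨x₀, hx₀⟩ := hne
  set F : EuclideanSpace ℝ (Fin n) → ℝ := FGT η κ y with hFdef
  have hFcont : Continuous F := FGT_cont η κ y
  set C : Set (EuclideanSpace ℝ (Fin n)) := {x | ∀ i, ⟪x, η i⟫ ≤ κ i} with hCdef
  have hCclosed : IsClosed C := by
    have : C = ⋂ i, {x : EuclideanSpace ℝ (Fin n) | ⟪x, η i⟫ ≤ κ i} := by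
      ext z; simp [hCdef, Set.mem_iInter]
    rw [this]
    exact isClosed_iInter fun i =>
      isClosed_le (continuous_id.inner continuous_const) continuous_const
  -- lower bound
  have hlb : ∀ x ∈ C, (1/2 : ℝ) * ‖x - y‖ ^ 2 - N / 2 ≤ F x := by
    intro x hx
    have h1 : ∑ i : Fin N, (-1 : ℝ) ≤ ∑ i, phiGT (κ i - ⟪x, η i⟫) :=
      Finset.sum_le_sum fun i _ => phiGT_lb (by simpa using sub_nonneg.mpr (hx i))
    have h2 : ∑ i : Fin N, (-1 : ℝ) = -(N : ℝ) := by simp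
    rw [h2] at h1
    have h3 : F x = (1/2 : ℝ) * ⟪x - y, x - y⟫ + (1/2 : ℝ) * ∑ i, phiGT (κ i - ⟪x, η i⟫) := rfl
    rw [h3, real_inner_self_eq_norm_sq]
    linarith
  obtain ⟨M, hM⟩ : ∃ M : ℝ, M = F x₀ := ⟨_, rfl⟩
  obtain ⟨R, hR⟩ : ∃ R : ℝ, R = max (dist x₀ y) (Real.sqrt (2 * M + N + 1)) := ⟨_, rfl⟩
  have hR0 : 0 ≤ R := hR ▸ le_trans dist_nonneg (le_max_left _ _)
  have hR2 : 2 * M + N + 1 ≤ R ^ 2 := by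
    rcases le_or_gt (2 * M + N + 1) 0 with h | h
    · nlinarith [sq_nonneg R]
    · have h3 := Real.sq_sqrt h.le
      have h4 : Real.sqrt (2 * M + N + 1) ≤ R := hR ▸ le_max_right _ _
      nlinarith [Real.sqrt_nonneg (2 * M + N + 1)]
  have hcoer : ∀ x ∈ C, R < dist x y → M < F x := by
    intro x hx hd
    have h1 : dist x y = ‖x - y‖ := dist_eq_norm x y
    have h3 := hlb x hx
    have h5 : R ^ 2 < ‖x - y‖ ^ 2 := by
      rw [← h1]; nlinarith [dist_nonneg (x := x) (y := y)]
    linarith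
  have hx₀C : x₀ ∈ C := fun i => (hx₀ i).le
  obtain ⟨a, haC, hmin'⟩ := hFcont.continuousOn.exists_isMinOn' hCclosed hx₀C (by
    rw [Filter.eventually_inf_principal]
    refine Filter.hasBasis_cocompact.eventually_iff.mpr
      ⟨Metric.closedBall y R, isCompact_closedBall y R, fun x hx hxC => ?_⟩
    exact hM ▸ (hcoer x hxC (lt_of_not_ge fun h => hx (Metric.mem_closedBall.mpr h))).le)
  have hmin : ∀ x ∈ C, F a ≤ F x := fun x hx => hmin' hx
  -- the minimizer is interior
  have haInt : ∀ i, ⟪a, η i⟫ < κ i := by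
    by_contra hcon
    push_neg at hcon
    obtain ⟨i₀, hi₀⟩ := hcon
    obtain ⟨aa, haa⟩ : ∃ aa : Fin N → ℝ, aa = fun i => κ i - ⟪a, η i⟫ := ⟨_, rfl⟩
    obtain ⟨b, hb⟩ : ∃ b : Fin N → ℝ, b = fun i => κ i - ⟪x₀, η i⟫ := ⟨_, rfl⟩
    have haa0 : ∀ i, 0 ≤ aa i := fun i => haa ▸ sub_nonneg.mpr (haC i)
    have hb0 : ∀ i, 0 < b i := fun i => hb ▸ sub_pos.mpr (hx₀ i)
    have haai₀ : aa i₀ = 0 := le_antisymm (haa ▸ sub_nonpos.mpr hi₀) (haa0 i₀)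
    obtain ⟨d, hd⟩ : ∃ d, d = x₀ - a := ⟨_, rfl⟩
    obtain ⟨A, hA⟩ : ∃ A : ℝ, A = ⟪a - y, d⟫ + (1/2 : ℝ) * ⟪d, d⟫
        + (1/2 : ℝ) * ∑ i ∈ Finset.univ.erase i₀, (phiGT (b i) - phiGT (aa i))
        + (1/2 : ℝ) * (b i₀ * Real.log (b i₀) - b i₀) := ⟨_, rfl⟩
    obtain ⟨s, hs⟩ : ∃ s : ℝ, s = min 1 (Real.exp ((-(2 * A) - 2) / b i₀)) := ⟨_, rfl⟩
    have hs0 : 0 < s := hs ▸ lt_min one_pos (Real.exp_pos _)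
    have hs1 : s ≤ 1 := hs ▸ min_le_left _ _
    obtain ⟨xs, hxs⟩ : ∃ xs, xs = a + s • d := ⟨_, rfl⟩
    have hseg : ∀ i, κ i - ⟪xs, η i⟫ = (1 - s) * aa i + s * b i := by
      intro i
      simp only [hxs, hd, inner_add_left, real_inner_smul_left, inner_sub_left, haa, hb]
      ring
    have hxsC : xs ∈ C := by
      intro j
      have h0j := hseg j
      have hj : (0:ℝ) ≤ (1 - s) * aa j + s * b j :=
        add_nonneg (mul_nonneg (by linarith) (haa0 j)) (mul_nonneg hs0.le (hb0 j).le)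
      linarith
    have h5 : F a ≤ F xs := hmin xs hxsC
    -- quadratic part
    have quad : ⟪xs - y, xs - y⟫ ≤ ⟪a - y, a - y⟫ + s * (2 * ⟪a - y, d⟫ + ⟪d, d⟫) := by
      have e1 : xs - y = (a - y) + s • d := by rw [hxs]; abel
      rw [e1, real_inner_add_add_self]
      simp only [real_inner_smul_left, real_inner_smul_right]
      nlinarith [mul_nonneg (mul_nonneg hs0.le (sub_nonneg.mpr hs1)) (real_inner_self_nonneg (x := d))]
    -- sum part
    have hsum : ∑ i, phiGT (κ i - ⟪xs, η i⟫) ≤ ∑ i, phiGT (aa i)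
        + s * (∑ i ∈ Finset.univ.erase i₀, (phiGT (b i) - phiGT (aa i))
          + (b i₀ * Real.log (b i₀) - b i₀) + b i₀ * Real.log s) := by
      have hterm : ∀ i ∈ Finset.univ.erase i₀,
          phiGT (κ i - ⟪xs, η i⟫) ≤ phiGT (aa i) + s * (phiGT (b i) - phiGT (aa i)) := by
        intro i _
        have hc := phiGT_convex.2 (Set.mem_Ici.mpr (haa0 i)) (Set.mem_Ici.mpr (hb0 i).le)
          (by linarith : (0:ℝ) ≤ 1 - s) hs0.le (by ring)
        rw [smul_eq_mul, smul_eq_mul, smul_eq_mul, smul_eq_mul, ← hseg i] at hc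
        nlinarith
      have hi₀term : phiGT (κ i₀ - ⟪xs, η i₀⟫)
          = s * (b i₀ * Real.log s + (b i₀ * Real.log (b i₀) - b i₀)) := by
        rw [hseg i₀, haai₀]
        have : (1 - s) * 0 + s * b i₀ = s * b i₀ := by ring
        rw [this]
        unfold phiGT
        rw [Real.log_mul (ne_of_gt hs0) (ne_of_gt (hb0 i₀))]
        ring
      calc ∑ i, phiGT (κ i - ⟪xs, η i⟫)
          = phiGT (κ i₀ - ⟪xs, η i₀⟫)
            + ∑ i ∈ Finset.univ.erase i₀, phiGT (κ i - ⟪xs, η i⟫) := by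
            exact (Finset.add_sum_erase _ (fun i => phiGT (κ i - ⟪xs, η i⟫))
              (Finset.mem_univ i₀)).symm
        _ ≤ s * (b i₀ * Real.log s + (b i₀ * Real.log (b i₀) - b i₀))
            + ∑ i ∈ Finset.univ.erase i₀, (phiGT (aa i) + s * (phiGT (b i) - phiGT (aa i))) := by
            rw [hi₀term]
            exact add_le_add_right (Finset.sum_le_sum hterm) _
        _ = ∑ i ∈ Finset.univ.erase i₀, phiGT (aa i)
            + s * (∑ i ∈ Finset.univ.erase i₀, (phiGT (b i) - phiGT (aa i))
              + (b i₀ * Real.log (b i₀) - b i₀) + b i₀ * Real.log s) := by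
            rw [Finset.sum_add_distrib, ← Finset.mul_sum]
            ring
        _ = ∑ i, phiGT (aa i)
            + s * (∑ i ∈ Finset.univ.erase i₀, (phiGT (b i) - phiGT (aa i))
              + (b i₀ * Real.log (b i₀) - b i₀) + b i₀ * Real.log s) := by
            congr 1
            rw [← Finset.add_sum_erase _ (fun i => phiGT (aa i)) (Finset.mem_univ i₀), haai₀]
            simp [phiGT]
    -- combine
    have hFa : F a = (1/2 : ℝ) * ⟪a - y, a - y⟫ + (1/2 : ℝ) * ∑ i, phiGT (aa i) := by
      rw [haa]; rfl
    have hFxs' : F xs = (1/2 : ℝ) * ⟪xs - y, xs - y⟫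
        + (1/2 : ℝ) * ∑ i, phiGT (κ i - ⟪xs, η i⟫) := rfl
    have hFxs : F xs ≤ F a + s * (A + (b i₀ / 2) * Real.log s) := by
      rw [hFa, hFxs', hA]
      linarith [quad, hsum]
    have hlogs : Real.log s ≤ (-(2 * A) - 2) / b i₀ := by
      calc Real.log s ≤ Real.log (Real.exp ((-(2 * A) - 2) / b i₀)) :=
            Real.log_le_log hs0 (hs ▸ min_le_right _ _)
        _ = (-(2 * A) - 2) / b i₀ := Real.log_exp _
    have hneg : A + (b i₀ / 2) * Real.log s ≤ -1 := by
      have h6 : (b i₀ / 2) * Real.log s ≤ (b i₀ / 2) * ((-(2 * A) - 2) / b i₀) :=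
        mul_le_mul_of_nonneg_left hlogs (by linarith [hb0 i₀])
      have hbne : b i₀ ≠ 0 := (hb0 i₀).ne'
      have h7 : (b i₀ / 2) * ((-(2 * A) - 2) / b i₀) = -A - 1 := by
        field_simp
      linarith
    nlinarith
  -- gradient vanishes at the interior minimizer
  have hopen : IsOpen {x : EuclideanSpace ℝ (Fin n) | ∀ i, ⟪x, η i⟫ < κ i} := by
    have : {x : EuclideanSpace ℝ (Fin n) | ∀ i, ⟪x, η i⟫ < κ i}
        = ⋂ i, {x : EuclideanSpace ℝ (Fin n) | ⟪x, η i⟫ < κ i} := by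
      ext z; simp [Set.mem_iInter]
    rw [this]
    exact isOpen_iInter_of_finite fun i =>
      isOpen_lt (continuous_id.inner continuous_const) continuous_const
  have hlocal : IsLocalMin F a := by
    filter_upwards [hopen.mem_nhds haInt] with z hz using hmin z fun i => (hz i).le
  have hder := FGT_hasFDerivAt η κ y a haInt
  have hzero := hlocal.hasFDerivAt_eq_zero hder
  set v := a - y - (1/2 : ℝ) • ∑ i, Real.log (κ i - ⟪a, η i⟫) • η i with hv
  have hvv : ⟪v, v⟫ = 0 := by
    have := congrArg (fun L : EuclideanSpace ℝ (Fin n) →L[ℝ] ℝ => L v) hzero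
    simpa using this
  have hv0 : v = 0 := inner_self_eq_zero.mp hvv
  refine ⟨a, haInt, ?_⟩
  have : a - (1/2 : ℝ) • ∑ i, Real.log (κ i - ⟪a, η i⟫) • η i - y = 0 := by
    rw [sub_right_comm]; exact hv0
  exact sub_eq_zero.mp this
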